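/- Let n be a real unit vector in ℝ³ and let R_n(α) = cos(α/2)·I - i·sin(α/2)·(n·σ) be the corresponding rotation matrix in M₂(ℂ). If θ is a real number such that θ/π is irrational, then for every real α and every ε > 0 there exists a natural number k such that ‖R_n(α) - R_n(θ)^k‖ < ε (operator norm on M₂(ℂ)). -/

import Mathlib

open Matrix Complex
open scoped Real Matrix.Norms.L2Operator

noncomputable section

/-- The Pauli matrix σx. -/
def σx : Matrix (Fin 2) (Fin 2) ℂ := !![0, 1; 1, 0]

/-- The Pauli matrix σy. -/
def σy : Matrix (Fin 2) (Fin 2) ℂ := !![0, -Complex.I; Complex.I, 0]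

/-- The Pauli matrix σz. -/
def σz : Matrix (Fin 2) (Fin 2) ℂ := !![1, 0; 0, -1]

/-- `n·σ = a·σx + b·σy + c·σz` for a real vector `n = (a, b, c)`. -/
def dotσ (n : Fin 3 → ℝ) : Matrix (Fin 2) (Fin 2) ℂ :=
  (n 0 : ℂ) • σx + (n 1 : ℂ) • σy + (n 2 : ℂ) • σz

/-- The rotation `R_n(α) = cos(α/2)·I - i·sin(α/2)·(n·σ)`. -/
def Rot (n : Fin 3 → ℝ) (α : ℝ) : Matrix (Fin 2) (Fin 2) ℂ :=
  (Real.cos (α / 2) : ℂ) • (1 : Matrix (Fin 2) (Fin 2) ℂ)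
    - (Complex.I * (Real.sin (α / 2) : ℂ)) • dotσ n


lemma dotσ_eq (n : Fin 3 → ℝ) :
    dotσ n = !![(n 2 : ℂ), (n 0 : ℂ) - (n 1 : ℂ) * Complex.I;
                (n 0 : ℂ) + (n 1 : ℂ) * Complex.I, -(n 2 : ℂ)] := by
  ext i j
  fin_cases i <;> fin_cases j <;>
    simp [dotσ, σx, σy, σz] <;> ring

lemma dotσ_sq (n : Fin 3 → ℝ) (hn : n 0 ^ 2 + n 1 ^ 2 + n 2 ^ 2 = 1) :
    dotσ n * dotσ n = 1 := by
  have h : ((n 0 : ℂ)) ^ 2 + (n 1 : ℂ) ^ 2 + (n 2 : ℂ) ^ 2 = 1 := by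
    exact_mod_cast congrArg (Complex.ofReal) hn
  have hI : (Complex.I : ℂ) ^ 2 = -1 := Complex.I_sq
  rw [dotσ_eq, Matrix.mul_fin_two, Matrix.one_fin_two]
  ext i j
  fin_cases i <;> fin_cases j <;> simp <;>
    first
      | linear_combination h - (n 1 : ℂ)^2 * hI
      | ring1


lemma cos_lip (a b : ℝ) : |Real.cos a - Real.cos b| ≤ |a - b| := by
  rw [Real.cos_sub_cos]
  have h1 : |Real.sin ((a + b) / 2)| ≤ 1 := Real.abs_sin_le_one _
  have h2 : |Real.sin ((a - b) / 2)| ≤ |(a - b) / 2| := Real.abs_sin_le_abs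
  have h3 : |(a - b) / 2| = |a - b| / 2 := by rw [abs_div]; norm_num
  rw [abs_mul, abs_mul]
  rw [h3] at h2
  have : |(-2 : ℝ)| = 2 := by norm_num
  rw [this]
  nlinarith [abs_nonneg (Real.sin ((a + b) / 2)), abs_nonneg (Real.sin ((a - b) / 2)),
    abs_nonneg (a - b)]

lemma sin_lip (a b : ℝ) : |Real.sin a - Real.sin b| ≤ |a - b| := by
  rw [Real.sin_sub_sin]
  have h1 : |Real.cos ((a + b) / 2)| ≤ 1 := Real.abs_cos_le_one _
  have h2 : |Real.sin ((a - b) / 2)| ≤ |(a - b) / 2| := Real.abs_sin_le_abs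
  have h3 : |(a - b) / 2| = |a - b| / 2 := by rw [abs_div]; norm_num
  rw [abs_mul, abs_mul]
  rw [h3] at h2
  have : |(2 : ℝ)| = 2 := by norm_num
  rw [this]
  nlinarith [abs_nonneg (Real.cos ((a + b) / 2)), abs_nonneg (Real.sin ((a - b) / 2)),
    abs_nonneg (a - b)]

lemma Rot_add (n : Fin 3 → ℝ) (hn : n 0 ^ 2 + n 1 ^ 2 + n 2 ^ 2 = 1) (α β : ℝ) :
    Rot n α * Rot n β = Rot n (α + β) := by
  have hD := dotσ_sq n hn
  unfold Rot
  have hc : ((α + β) / 2) = α / 2 + β / 2 := by ring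
  rw [hc, Real.cos_add, Real.sin_add]
  simp only [sub_mul, mul_sub, smul_mul_assoc, mul_smul_comm, one_mul, mul_one, smul_smul, hD]
  push_cast
  match_scalars <;> ring_nf <;> simp [Complex.I_sq] <;> ring

lemma Rot_zero (n : Fin 3 → ℝ) : Rot n 0 = 1 := by
  simp [Rot]

lemma Rot_pow (n : Fin 3 → ℝ) (hn : n 0 ^ 2 + n 1 ^ 2 + n 2 ^ 2 = 1) (θ : ℝ) (k : ℕ) :
    (Rot n θ) ^ k = Rot n (k * θ) := by
  induction k with
  | zero => simp [Rot_zero]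
  | succ k ih =>
    rw [pow_succ, ih, Rot_add n hn]
    congr 1
    push_cast
    ring

lemma Rot_periodic (n : Fin 3 → ℝ) (α : ℝ) (m : ℤ) :
    Rot n (α + m * (4 * π)) = Rot n α := by
  unfold Rot
  have h2 : (α + m * (4 * π)) / 2 = α / 2 + m * (2 * π) := by ring
  rw [h2, Real.cos_add_int_mul_two_pi, Real.sin_add_int_mul_two_pi]

lemma Rot_dist (n : Fin 3 → ℝ) (α β : ℝ) :
    ‖Rot n α - Rot n β‖ ≤ (‖(1 : Matrix (Fin 2) (Fin 2) ℂ)‖ + ‖dotσ n‖) * |α - β| := by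
  have key : Rot n α - Rot n β
      = ((Real.cos (α / 2) - Real.cos (β / 2) : ℝ) : ℂ) • (1 : Matrix (Fin 2) (Fin 2) ℂ)
      - (Complex.I * ((Real.sin (α / 2) - Real.sin (β / 2) : ℝ) : ℂ)) • dotσ n := by
    unfold Rot
    push_cast
    module
  rw [key]
  have hcos : |Real.cos (α / 2) - Real.cos (β / 2)| ≤ |α - β| := by
    calc |Real.cos (α / 2) - Real.cos (β / 2)| ≤ |α / 2 - β / 2| := cos_lip _ _
    _ ≤ |α - β| := by rw [div_sub_div_same, abs_div]; simp
  have hsin : |Real.sin (α / 2) - Real.sin (β / 2)| ≤ |α - β| := by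
    calc |Real.sin (α / 2) - Real.sin (β / 2)| ≤ |α / 2 - β / 2| := sin_lip _ _
    _ ≤ |α - β| := by rw [div_sub_div_same, abs_div]; simp
  calc ‖_ - _‖ ≤ ‖((Real.cos (α / 2) - Real.cos (β / 2) : ℝ) : ℂ) • (1 : Matrix (Fin 2) (Fin 2) ℂ)‖
        + ‖(Complex.I * ((Real.sin (α / 2) - Real.sin (β / 2) : ℝ) : ℂ)) • dotσ n‖ :=
      norm_sub_le _ _
    _ = |Real.cos (α / 2) - Real.cos (β / 2)| * ‖(1 : Matrix (Fin 2) (Fin 2) ℂ)‖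
        + |Real.sin (α / 2) - Real.sin (β / 2)| * ‖dotσ n‖ := by
      rw [norm_smul, norm_smul, norm_mul, Complex.norm_I, one_mul, Complex.norm_real,
        Complex.norm_real, Real.norm_eq_abs, Real.norm_eq_abs]
    _ ≤ |α - β| * ‖(1 : Matrix (Fin 2) (Fin 2) ℂ)‖ + |α - β| * ‖dotσ n‖ := by
      gcongr <;> positivity
    _ = (‖(1 : Matrix (Fin 2) (Fin 2) ℂ)‖ + ‖dotσ n‖) * |α - β| := by ring

/-- For positive step `u` and nonnegative target `t`, some natural multiple of `u`
is within `u` of `t`. -/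
lemma nat_mul_approx {u t : ℝ} (hu : 0 < u) (ht : 0 ≤ t) :
    ∃ q : ℕ, |q * u - t| < u := by
  refine ⟨⌊t / u⌋.toNat, ?_⟩
  have h0 : (0 : ℤ) ≤ ⌊t / u⌋ := Int.floor_nonneg.mpr (by positivity)
  have hq : ((⌊t / u⌋.toNat : ℕ) : ℝ) = ((⌊t / u⌋ : ℤ) : ℝ) := by
    exact_mod_cast Int.toNat_of_nonneg h0
  have h1 : (⌊t / u⌋ : ℝ) ≤ t / u := Int.floor_le _
  have h2 : t / u < ⌊t / u⌋ + 1 := Int.lt_floor_add_one _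
  rw [abs_lt, hq]
  constructor
  · nlinarith [(div_lt_iff₀ hu).mp h2]
  · nlinarith [(le_div_iff₀ hu).mp h1]

/-- Density of natural multiples of an irrational number mod 1. -/
lemma irrational_nat_dense {x : ℝ} (hx : Irrational x) (t δ : ℝ) (hδ : 0 < δ) :
    ∃ k : ℕ, ∃ m : ℤ, |k * x - m - t| < δ := by
  obtain ⟨N, hN⟩ := exists_nat_gt (1 / δ)
  have hN0 : 0 < N := by
    by_contra h
    push_neg at h
    interval_cases N
    · simp at hN
      nlinarith [one_div_pos.mpr hδ]
  obtain ⟨K, hK0, _, hKle⟩ := Real.exists_nat_abs_mul_sub_round_le x hN0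
  set J : ℤ := round ((K : ℝ) * x) with hJ
  set u : ℝ := (K : ℝ) * x - J with hu
  have hune : u ≠ 0 := by
    intro h
    have : (K : ℝ) * x = (J : ℝ) := by linarith [sub_eq_zero.mp h]
    have hKx : Irrational ((K : ℝ) * x) := by
      exact hx.natCast_mul (m := K) (by omega)
    exact hKx ⟨J, this.symm⟩
  have hud : |u| < δ := by
    have h1 : (1 : ℝ) / (N + 1) < δ := by
      rw [div_lt_iff₀ (by positivity)]
      have : 1 / δ < N + 1 := by linarith
      calc (1 : ℝ) = δ * (1 / δ) := by field_simp
      _ < δ * (N + 1) := by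
        apply mul_lt_mul_of_pos_left _ hδ
        exact this
    calc |u| ≤ 1 / (N + 1) := hKle
    _ < δ := h1
  -- target: t' = fract t ∈ [0,1)
  rcases hune.lt_or_gt with hneg | hpos
  · -- u < 0 : approximate 1 - fract t ≥ 0 by multiples of -u
    obtain ⟨q, hq⟩ := nat_mul_approx (u := -u) (t := 1 - Int.fract t) (by linarith)
      (by linarith [Int.fract_lt_one t])
    refine ⟨q * K, q * J - ⌊t⌋ - 1, ?_⟩
    have hqK : ((q * K : ℕ) : ℝ) * x - ((q * J - ⌊t⌋ - 1 : ℤ) : ℝ) - t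
        = -(q * (-u) - (1 - Int.fract t)) := by
      push_cast
      rw [hu]
      have : Int.fract t = t - ⌊t⌋ := Int.self_sub_floor t ▸ rfl
      rw [Int.fract]
      push_cast
      ring
    rw [hqK, abs_neg]
    calc |q * (-u) - (1 - Int.fract t)| < -u := hq
    _ ≤ |u| := by rw [abs_of_neg hneg]
    _ < δ := hud
  · obtain ⟨q, hq⟩ := nat_mul_approx (u := u) (t := Int.fract t) hpos (Int.fract_nonneg t)
    refine ⟨q * K, q * J - ⌊t⌋, ?_⟩
    have hqK : ((q * K : ℕ) : ℝ) * x - ((q * J - ⌊t⌋ : ℤ) : ℝ) - t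
        = q * u - Int.fract t := by
      push_cast
      rw [hu, Int.fract]
      push_cast
      ring
    rw [hqK]
    calc |q * u - Int.fract t| < u := hq
    _ ≤ |u| := le_abs_self u
    _ < δ := hud

theorem rotation_irrational_approx (n : Fin 3 → ℝ)
    (hn : n 0 ^ 2 + n 1 ^ 2 + n 2 ^ 2 = 1)
    (θ : ℝ) (hθ : Irrational (θ / π)) :
    ∀ α : ℝ, ∀ ε : ℝ, 0 < ε → ∃ k : ℕ, ‖Rot n α - (Rot n θ) ^ k‖ < ε := by
  intro α ε hε
  set C : ℝ := ‖(1 : Matrix (Fin 2) (Fin 2) ℂ)‖ + ‖dotσ n‖ with hC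
  have hC0 : 0 ≤ C := by positivity
  set δ : ℝ := ε / (C + 1) with hδdef
  have hδ : 0 < δ := by positivity
  have hπ : 0 < π := Real.pi_pos
  -- x = θ / (4π) is irrational
  have hx : Irrational (θ / (4 * π)) := by
    have h4 : (θ / (4 * π)) = (θ / π) / 4 := by
      rw [div_div, mul_comm]
    rw [h4]
    exact_mod_cast hθ.div_natCast (m := 4) (by norm_num)
  obtain ⟨k, m, hkm⟩ := irrational_nat_dense hx (α / (4 * π)) (δ / (4 * π))
    (by positivity)
  refine ⟨k, ?_⟩
  have hθk : (Rot n θ) ^ k = Rot n (k * θ) := Rot_pow n hn θ k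
  have hper : Rot n (k * θ) = Rot n (k * θ - m * (4 * π)) := by
    conv_lhs => rw [show (k : ℝ) * θ = (k * θ - m * (4 * π)) + m * (4 * π) by ring]
    exact Rot_periodic n _ m
  rw [hθk, hper]
  have hdist := Rot_dist n α (k * θ - m * (4 * π))
  have habs : |α - (k * θ - m * (4 * π))| < δ := by
    have h4 : (0 : ℝ) < 4 * π := by positivity
    have : |k * (θ / (4 * π)) - m - α / (4 * π)| < δ / (4 * π) := hkm
    have heq : k * (θ / (4 * π)) - m - α / (4 * π)
        = (k * θ - m * (4 * π) - α) / (4 * π) := by field_simp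
    rw [heq, abs_div, abs_of_pos h4, div_lt_div_iff_of_pos_right h4] at this
    rw [abs_sub_comm]
    exact this
  calc ‖Rot n α - Rot n (k * θ - m * (4 * π))‖ ≤ C * |α - (k * θ - m * (4 * π))| := hdist
  _ ≤ C * δ := mul_le_mul_of_nonneg_left habs.le hC0
  _ < ε := by
    rw [hδdef]
    have h1 : (0 : ℝ) < C + 1 := by linarith
    have h2 : C * ε < ε * (C + 1) := by nlinarith
    calc C * (ε / (C + 1)) = C * ε / (C + 1) := by ring
    _ < ε := (div_lt_iff₀ h1).mpr h2
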